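/- arXiv:2308.09344 — 3 statements merged into one kernel-verified Lean document; each statement's English description precedes it below -/
import Mathlib

section
/- Let g_n = |Av_n(132, 123*)| and f_n be the number of permutations x ∈ Av_n(132) such that ind_x(n) - 1 = ind_x(n-1) > 1 and the permutation obtained by deleting n from x avoids 123*. Then for all n ≥ 2, f_n = g_{n-1} - g_{n-2}. -/
/-- `isoOrd p q` : `q` is order-isomorphic to `p`. -/
def isoOrd (p q : List ℕ) : Bool :=
  (p.length == q.length) &&
    (List.range p.length).all fun i =>
      (List.range p.length).all fun j =>
        decide ((p.getD i 0 < p.getD j 0) ↔ (q.getD i 0 < q.getD j 0))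

/-- `containsPat p w` : the word `w` contains an occurrence of the classical pattern `p`. -/
def containsPat (p w : List ℕ) : Bool :=
  (w.sublistsLen p.length).any (isoOrd p)

/-- Pop phase of the right-greedy `T`-avoiding stack: with next input `a`,
pop entries from the top of the stack while pushing `a` would create a pattern of `T`
(read from top to bottom).  Returns the remaining stack and the popped entries in output order. -/
def popPhase (T : List (List ℕ)) (a : ℕ) : List ℕ → List ℕ × List ℕ
  | [] => ([], [])
  | b :: s =>
    if T.any (fun p => containsPat p (a :: b :: s)) then
      let r := popPhase T a s
      (r.1, b :: r.2)
    else (b :: s, [])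

/-- Main loop of the right-greedy `T`-avoiding stack map. -/
def stkAux (T : List (List ℕ)) : List ℕ → List ℕ → List ℕ → List ℕ
  | [], stack, out => out ++ stack
  | a :: rest, stack, out =>
    let r := popPhase T a stack
    stkAux T rest (a :: r.1) (out ++ r.2)

/-- The generalized stack-sorting map `s_T` : the input is pushed right-greedily through a
stack which must avoid (read from top to bottom) every pattern in `T`. -/
def sT (T : List (List ℕ)) (x : List ℕ) : List ℕ := stkAux T x [] []

/-- West's stack-sorting map: the stack must be increasing from top to bottom,
i.e. must avoid `21` read from top to bottom. -/
def westSort (x : List ℕ) : List ℕ := sT [[2,1]] x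

/-- `x` is a permutation of `{1,…,n}`, written as a list. -/
def IsPermList (n : ℕ) (x : List ℕ) : Prop := x.Perm (List.range' 1 n)

/-- The identity permutation `1 2 … n`. -/
def idPerm (n : ℕ) : List ℕ := List.range' 1 n

/-- `x` contains the bivincular pattern `132*` : positions `i < j` (0-based) with
`x i < x (j+1)` and `x j = x (j+1) + 1`. -/
def Has132Star (x : List ℕ) : Prop :=
  ∃ i j, i < j ∧ j + 1 < x.length ∧ x.getD i 0 < x.getD (j+1) 0 ∧
    x.getD j 0 = x.getD (j+1) 0 + 1

/-- `x` contains the bivincular pattern `123*` : positions `i < j` (0-based) with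
`x i < x j` and `x (j+1) = x j + 1`. -/
def Has123Star (x : List ℕ) : Prop :=
  ∃ i j, i < j ∧ j + 1 < x.length ∧ x.getD i 0 < x.getD j 0 ∧
    x.getD (j+1) 0 = x.getD j 0 + 1

/-- Boolean version of `Has132Star`. -/
def has132star (x : List ℕ) : Bool :=
  (List.range x.length).any fun j =>
    decide (j + 1 < x.length) && (x.getD j 0 == x.getD (j+1) 0 + 1) &&
      (List.range j).any fun i => decide (x.getD i 0 < x.getD (j+1) 0)

/-- Boolean version of `Has123Star`. -/
def has123star (x : List ℕ) : Bool :=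
  (List.range x.length).any fun j =>
    decide (j + 1 < x.length) && (x.getD (j+1) 0 == x.getD j 0 + 1) &&
      (List.range j).any fun i => decide (x.getD i 0 < x.getD j 0)

/-- `g n = |Av_n(132, 123*)|`. -/
def gCount (n : ℕ) : ℕ :=
  ((List.range' 1 n).permutations.filter fun x =>
    !containsPat [1,3,2] x && !has123star x).length

/-- `f n` : the number of `x ∈ Av_n(132)` with `ind_x(n) - 1 = ind_x(n-1) > 1` (1-based)
whose deletion of `n` avoids `123*`. -/
def fCount (n : ℕ) : ℕ :=
  ((List.range' 1 n).permutations.filter fun x =>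
    !containsPat [1,3,2] x && (x.idxOf n == x.idxOf (n-1) + 1) &&
      decide (1 ≤ x.idxOf (n-1)) && !has123star (x.erase n)).length

lemma iso132 (a b c : ℕ) : isoOrd [1,3,2] [a,b,c] = true ↔ a < c ∧ c < b := by
  simp [isoOrd, List.range_succ]
  omega

lemma contains132_iff (w : List ℕ) :
    containsPat [1,3,2] w = true ↔ ∃ a b c, [a,b,c].Sublist w ∧ a < c ∧ c < b := by
  simp only [containsPat, List.any_eq_true, List.mem_sublistsLen]
  constructor
  · rintro ⟨t, ⟨hs, hl⟩, hi⟩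
    rcases t with _|⟨a,_|⟨b,_|⟨c,_|⟨d,t⟩⟩⟩⟩ <;> simp_all
    exact ⟨a, b, c, hs, (iso132 a b c).1 hi⟩
  · rintro ⟨a, b, c, hs, h1, h2⟩
    exact ⟨[a,b,c], ⟨hs, rfl⟩, (iso132 a b c).2 ⟨h1, h2⟩⟩

lemma star_iff (x : List ℕ) : has123star x = true ↔
    ∃ i j, i < j ∧ j + 1 < x.length ∧ x.getD i 0 < x.getD j 0 ∧
      x.getD (j+1) 0 = x.getD j 0 + 1 := by
  simp only [has123star, List.any_eq_true, List.mem_range, Bool.and_eq_true, beq_iff_eq,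
    decide_eq_true_eq]
  constructor
  · rintro ⟨j, _, ⟨h1, h2⟩, i, hij, h3⟩
    exact ⟨i, j, hij, h1, h3, h2⟩
  · rintro ⟨i, j, hij, h1, h2, h3⟩
    exact ⟨j, by omega, ⟨h1, h3⟩, i, hij, h2⟩

lemma contains132_cons_max (m : ℕ) (z : List ℕ) (hz : ∀ a ∈ z, a < m) :
    containsPat [1,3,2] (m :: z) = containsPat [1,3,2] z := by
  rw [Bool.eq_iff_iff, contains132_iff, contains132_iff]
  constructor
  · rintro ⟨a, b, c, hs, h1, h2⟩
    rcases List.sublist_cons_iff.1 hs with h | ⟨r, hr, hrs⟩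
    · exact ⟨a, b, c, h, h1, h2⟩
    · injection hr with e1 e2
      subst e1; subst e2
      have hc : c ∈ z := hrs.subset (by simp)
      have := hz c hc; omega
  · rintro ⟨a, b, c, hs, h1, h2⟩
    exact ⟨a, b, c, hs.trans (List.sublist_cons_self m z), h1, h2⟩

lemma star_cons_max (m : ℕ) (z : List ℕ) (hz : ∀ a ∈ z, a < m) :
    has123star (m :: z) = has123star z := by
  rw [Bool.eq_iff_iff, star_iff, star_iff]
  constructor
  · rintro ⟨i, j, hij, hlen, h1, h2⟩
    obtain ⟨j', rfl⟩ : ∃ j', j = j' + 1 := ⟨j - 1, by omega⟩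
    simp only [List.length_cons] at hlen
    simp only [List.getD_cons_succ] at h1 h2
    rcases i with _ | i'
    · exfalso
      rw [List.getD_cons_zero] at h1
      have : z.getD j' 0 ∈ z := by
        rw [List.getD_eq_getElem z 0 (by omega)]; exact List.getElem_mem _
      have := hz _ this; omega
    · rw [List.getD_cons_succ] at h1
      exact ⟨i', j', by omega, by omega, h1, h2⟩
  · rintro ⟨i, j, hij, hlen, h1, h2⟩
    refine ⟨i + 1, j + 1, by omega, by simp only [List.length_cons]; omega, ?_, ?_⟩ <;>
      simp only [List.getD_cons_succ] <;> assumption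

lemma contains132_insert (u v : List ℕ) (m : ℕ) (hu : ∀ a ∈ u, a < m) (hv : ∀ a ∈ v, a < m) :
    containsPat [1,3,2] (u ++ m :: (m+1) :: v) = containsPat [1,3,2] (u ++ m :: v) := by
  rw [Bool.eq_iff_iff, contains132_iff, contains132_iff]
  constructor
  · rintro ⟨a, b, c, hs, h1, h2⟩
    rw [List.sublist_append_iff] at hs
    obtain ⟨t₁, t₂, heq, ht₁, ht₂⟩ := hs
    rcases List.sublist_cons_iff.1 ht₂ with h | ⟨r, rfl, hr⟩
    · rcases List.sublist_cons_iff.1 h with h' | ⟨r', rfl, hr'⟩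
      · -- t₂ <+ v
        refine ⟨a, b, c, ?_, h1, h2⟩
        rw [heq]
        exact ht₁.append (h'.trans (List.sublist_cons_self m v))
      · -- t₂ = (m+1) :: r', r' <+ v
        rcases t₁ with _ | ⟨x, _ | ⟨y, t⟩⟩ <;>
          simp only [List.cons_append, List.nil_append, List.cons.injEq] at heq
        · obtain ⟨rfl, h34⟩ := heq
          have hc : c ∈ v := hr'.subset (by rw [← h34]; simp)
          have := hv c hc; omega
        · obtain ⟨rfl, rfl, h34⟩ := heq
          have hc : c ∈ v := hr'.subset (by rw [← h34]; simp)
          have hcv : [c].Sublist v := by rw [h34]; exact hr'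
          exact ⟨a, m, c, ht₁.append (hcv.cons₂ m), h1, hv c hc⟩
        · obtain ⟨rfl, rfl, h34⟩ := heq
          rcases t with _ | ⟨w, t'⟩ <;>
            simp only [List.cons_append, List.nil_append, List.cons.injEq] at h34
          · obtain ⟨rfl, -⟩ := h34
            have hb : b ∈ u := ht₁.subset (by simp)
            have := hu b hb; omega
          · exact absurd h34.2 (by simp)
    · rcases List.sublist_cons_iff.1 hr with h' | ⟨r', rfl, hr'⟩
      · -- t₂ = m :: r, r <+ v
        refine ⟨a, b, c, ?_, h1, h2⟩
        rw [heq]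
        exact ht₁.append (h'.cons₂ m)
      · -- t₂ = m :: (m+1) :: r'
        rcases t₁ with _ | ⟨x, _ | ⟨y, t⟩⟩ <;>
          simp only [List.cons_append, List.nil_append, List.cons.injEq] at heq
        · obtain ⟨rfl, rfl, h34⟩ := heq
          have hc : c ∈ v := hr'.subset (by rw [← h34]; simp)
          have := hv c hc; omega
        · obtain ⟨rfl, rfl, rfl, -⟩ := heq
          omega
        · obtain ⟨rfl, rfl, h34⟩ := heq
          have hlen := congrArg List.length h34
          simp at hlen
          omega
  · rintro ⟨a, b, c, hs, h1, h2⟩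
    refine ⟨a, b, c, hs.trans ?_, h1, h2⟩
    exact ((List.sublist_cons_self (m+1) v).cons₂ m).append_left u

def permsF (n : ℕ) : Finset (List ℕ) := (List.range' 1 n).permutations.toFinset

lemma mem_permsF {n : ℕ} {x : List ℕ} : x ∈ permsF n ↔ x.Perm (List.range' 1 n) := by
  simp [permsF, List.mem_permutations]

lemma count_eq (n : ℕ) (p : List ℕ → Bool) :
    ((List.range' 1 n).permutations.filter p).length
      = ((permsF n).filter (fun x => p x = true)).card := by
  rw [permsF, ← List.toFinset_filter,
    List.toFinset_card_of_nodup ((List.nodup_permutations _ (List.nodup_range' (s := 1) (n := n))).filter p)]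

def insA (m : ℕ) (y : List ℕ) : List ℕ :=
  y.take (y.idxOf m + 1) ++ (m+1) :: y.drop (y.idxOf m + 1)

lemma indexOf_split {u v : List ℕ} {m : ℕ} (hu : m ∉ u) :
    (u ++ m :: v).idxOf m = u.length := by
  rw [List.idxOf_append_of_notMem hu, List.idxOf_cons_self]; omega

lemma insA_eq (m : ℕ) (u v : List ℕ) (hu : m ∉ u) :
    insA m (u ++ m :: v) = u ++ m :: (m+1) :: v := by
  rw [insA, indexOf_split hu, show u ++ m :: v = (u ++ [m]) ++ v by simp,
    List.take_left' (by simp), List.drop_left' (by simp)]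
  simp

lemma erase_insert (m : ℕ) (u v : List ℕ) (hu : ∀ a ∈ u, a < m) :
    (u ++ m :: (m+1) :: v).erase (m+1) = u ++ m :: v := by
  rw [List.erase_append_right _ (fun h => by have := hu _ h; omega),
    List.erase_cons_tail (by simp), List.erase_cons_head]

lemma exists_split {y : List ℕ} {m : ℕ} (hm : m ∈ y) (hnd : y.Nodup) :
    ∃ u v, y = u ++ m :: v ∧ m ∉ u := by
  obtain ⟨u, v, rfl⟩ := List.append_of_mem hm
  exact ⟨u, v, rfl, fun h => (List.nodup_append'.1 hnd).2.2 h List.mem_cons_self⟩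

lemma perm_nodup {n : ℕ} {y : List ℕ} (h : y.Perm (List.range' 1 n)) : y.Nodup :=
  h.nodup_iff.2 (List.nodup_range' (s := 1) (n := n))

lemma perm_mem_lt {n : ℕ} {y : List ℕ} (h : y.Perm (List.range' 1 n)) {a : ℕ} (ha : a ∈ y) :
    1 ≤ a ∧ a < 1 + n :=
  List.mem_range'_1.1 (h.subset ha)

lemma perm_mem_top {n : ℕ} {y : List ℕ} (h : y.Perm (List.range' 1 (n+1))) : (n+1) ∈ y :=
  h.symm.subset (List.mem_range'_1.2 ⟨by omega, by omega⟩)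

lemma range'_concat' (n : ℕ) : List.range' 1 (n+1) = List.range' 1 n ++ [n+1] := by
  rw [List.range'_concat]; norm_num; rw [Nat.add_comm]

lemma perm_concat (n : ℕ) : (List.range' 1 (n+1)).Perm ((n+1) :: List.range' 1 n) := by
  rw [range'_concat', show (n+1) :: List.range' 1 n = (n+1) :: (List.range' 1 n ++ []) by simp]
  exact List.perm_middle

lemma decomp_y {k : ℕ} {y : List ℕ} (hperm : y.Perm (List.range' 1 (k+1))) :
    ∃ u v, y = u ++ (k+1) :: v ∧ (∀ a ∈ u, a < k+1) ∧ (∀ a ∈ v, a < k+1) ∧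
      y.idxOf (k+1) = u.length := by
  obtain ⟨u, v, rfl, hu⟩ := exists_split (perm_mem_top hperm) (perm_nodup hperm)
  have hnd := perm_nodup hperm
  have hv : (k+1) ∉ v := by
    have := (List.nodup_append.1 hnd).2.1
    simp at this; exact this.1
  refine ⟨u, v, rfl, ?_, ?_, indexOf_split hu⟩
  · intro a ha
    have := (perm_mem_lt hperm (by simp; tauto)).2
    rcases Nat.lt_or_ge a (k+1) with h | h
    · exact h
    · exact absurd (show a = k+1 by omega) (fun e => hu (e ▸ ha))
  · intro a ha
    have := (perm_mem_lt hperm (by simp; tauto)).2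
    rcases Nat.lt_or_ge a (k+1) with h | h
    · exact h
    · exact absurd (show a = k+1 by omega) (fun e => hv (e ▸ ha))

lemma decomp_x {k : ℕ} {x : List ℕ} (hperm : x.Perm (List.range' 1 (k+2)))
    (hidx : x.idxOf (k+2) = x.idxOf (k+1) + 1) :
    ∃ u v, x = u ++ (k+1) :: (k+2) :: v ∧ (∀ a ∈ u, a < k+1) ∧ (∀ a ∈ v, a < k+1) ∧
      x.idxOf (k+1) = u.length := by
  have hmem1 : (k+1) ∈ x := hperm.symm.subset (List.mem_range'_1.2 ⟨by omega, by omega⟩)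
  obtain ⟨u, w, rfl, hu⟩ := exists_split hmem1 (perm_nodup hperm)
  have hiu : (u ++ (k+1) :: w).idxOf (k+1) = u.length := indexOf_split hu
  have hu2 : (k+2) ∉ u := by
    intro h
    have h1 : (u ++ (k+1) :: w).idxOf (k+2) < u.length := by
      rw [List.idxOf_append_of_mem h]
      exact List.idxOf_lt_length_iff.2 h
    omega
  have hmem2 : (k+2) ∈ w := by
    have := perm_mem_top (n := k+1) hperm
    simp only [List.mem_append, List.mem_cons] at this
    rcases this with h | h | h
    · exact absurd h hu2
    · omega
    · exact h
  obtain ⟨c, v, rfl⟩ : ∃ c v, w = c :: v := by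
    cases w with
    | nil => simp at hmem2
    | cons c v => exact ⟨c, v, rfl⟩
  obtain rfl : c = k+2 := by
    rw [List.idxOf_append_of_notMem hu2] at hidx
    rw [List.idxOf_cons_ne _ (by omega : (k+1) ≠ (k+2))] at hidx
    rw [hiu] at hidx
    have h0 : List.idxOf (k+2) (c :: v) = 0 := by omega
    by_contra hne
    rw [List.idxOf_cons_ne _ hne] at h0
    omega
  have hnd := perm_nodup hperm
  have hnd2 := (List.nodup_append.1 hnd).2.1
  have hk1v : (k+1) ∉ v := by simp at hnd2 ⊢; tauto
  have hk2v : (k+2) ∉ v := by simp at hnd2 ⊢; tauto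
  refine ⟨u, v, rfl, ?_, ?_, hiu⟩
  · intro a ha
    have h1 := (perm_mem_lt hperm (show a ∈ u ++ (k+1) :: (k+2) :: v by simp [ha])).2
    have h2 : a ≠ k+1 := fun e => hu (e ▸ ha)
    have h3 : a ≠ k+2 := fun e => hu2 (e ▸ ha)
    omega
  · intro a ha
    have h1 := (perm_mem_lt hperm (show a ∈ u ++ (k+1) :: (k+2) :: v by simp [ha])).2
    have h2 : a ≠ k+1 := fun e => hk1v (e ▸ ha)
    have h3 : a ≠ k+2 := fun e => hk2v (e ▸ ha)
    omega

lemma E3 (k : ℕ) :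
    ((permsF (k+1)).filter (fun y => ((!containsPat [1,3,2] y && !has123star y) = true)
        ∧ ¬(1 ≤ List.idxOf (k+1) y))).card
      = ((permsF k).filter (fun x =>
          (!containsPat [1,3,2] x && !has123star x) = true)).card := by
  apply Finset.card_bij' (fun y _ => y.tail) (fun z _ => (k+1) :: z)
  · -- maps into
    intro y hy
    obtain ⟨hm, hc, hidx⟩ := Finset.mem_filter.1 hy
    have hperm := mem_permsF.1 hm
    obtain ⟨u, v, rfl, hu, hv, hiu⟩ := decomp_y hperm
    obtain rfl : u = [] := by
      rw [hiu] at hidx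
      exact List.eq_nil_of_length_eq_zero (by omega)
    simp only [List.nil_append, List.tail_cons] at *
    rw [Finset.mem_filter, mem_permsF]
    refine ⟨(hperm.trans (perm_concat k)).cons_inv, ?_⟩
    rw [← contains132_cons_max (k+1) v hv, ← star_cons_max (k+1) v hv]
    exact hc
  · intro z hz
    obtain ⟨hm, hc⟩ := Finset.mem_filter.1 hz
    have hperm := mem_permsF.1 hm
    have hb : ∀ a ∈ z, a < k+1 := fun a ha => by
      have := (perm_mem_lt hperm ha).2; omega
    rw [Finset.mem_filter, mem_permsF]
    refine ⟨(hperm.cons (k+1)).trans (perm_concat k).symm, ?_, ?_⟩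
    · rw [contains132_cons_max (k+1) z hb, star_cons_max (k+1) z hb]
      exact hc
    · simp [List.idxOf_cons_self]
  · intro y hy
    obtain ⟨hm, hc, hidx⟩ := Finset.mem_filter.1 hy
    have hperm := mem_permsF.1 hm
    obtain ⟨u, v, rfl, hu, hv, hiu⟩ := decomp_y hperm
    obtain rfl : u = [] := by
      rw [hiu] at hidx
      exact List.eq_nil_of_length_eq_zero (by omega)
    simp
  · intro z hz
    simp

lemma perm_x_of_y {k : ℕ} (u v : List ℕ) :
    (u ++ (k+1) :: (k+2) :: v).Perm ((k+2) :: (u ++ (k+1) :: v)) := by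
  have := List.perm_middle (a := k+2) (l₁ := u ++ [k+1]) (l₂ := v)
  simpa using this

lemma E1 (k : ℕ) :
    ((permsF (k+2)).filter (fun x => (!containsPat [1,3,2] x &&
        (x.idxOf (k+2) == x.idxOf (k+1) + 1) && decide (1 ≤ x.idxOf (k+1)) &&
        !has123star (x.erase (k+2))) = true)).card
      = ((permsF (k+1)).filter (fun y => ((!containsPat [1,3,2] y && !has123star y) = true)
          ∧ 1 ≤ List.idxOf (k+1) y)).card := by
  apply Finset.card_bij' (fun x _ => x.erase (k+2)) (fun y _ => insA (k+1) y)
  · intro x hx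
    obtain ⟨hm, hc⟩ := Finset.mem_filter.1 hx
    have hperm := mem_permsF.1 hm
    simp only [Bool.and_eq_true, Bool.not_eq_true', beq_iff_eq, decide_eq_true_eq] at hc
    obtain ⟨⟨⟨hcont, hidx⟩, hge⟩, hstar⟩ := hc
    obtain ⟨u, v, rfl, hu, hv, hiu⟩ := decomp_x hperm hidx
    have he : (u ++ (k+1) :: (k+2) :: v).erase (k+2) = u ++ (k+1) :: v :=
      erase_insert (k+1) u v hu
    rw [Finset.mem_filter, mem_permsF, he]
    refine ⟨((perm_x_of_y u v).symm.trans (hperm.trans (perm_concat (k+1)))).cons_inv, ?_, ?_⟩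
    · simp only [Bool.and_eq_true, Bool.not_eq_true']
      constructor
      · rw [← contains132_insert u v (k+1) hu hv]; exact hcont
      · rw [← he]; exact hstar
    · rw [indexOf_split (fun h => by have := hu _ h; omega)]
      omega
  · intro y hy
    obtain ⟨hm, hc, hge⟩ := Finset.mem_filter.1 hy
    have hperm := mem_permsF.1 hm
    simp only [Bool.and_eq_true, Bool.not_eq_true'] at hc
    obtain ⟨hcont, hstar⟩ := hc
    obtain ⟨u, v, rfl, hu, hv, hiu⟩ := decomp_y hperm
    have hu' : (k+1) ∉ u := fun h => by have := hu _ h; omega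
    rw [insA_eq (k+1) u v hu']
    have he : (u ++ (k+1) :: (k+2) :: v).erase (k+2) = u ++ (k+1) :: v :=
      erase_insert (k+1) u v hu
    rw [Finset.mem_filter, mem_permsF]
    refine ⟨(perm_x_of_y u v).trans ((hperm.cons (k+2)).trans (perm_concat (k+1)).symm), ?_⟩
    simp only [Bool.and_eq_true, Bool.not_eq_true', beq_iff_eq, decide_eq_true_eq]
    have hi1 : (u ++ (k+1) :: (k+2) :: v).idxOf (k+1) = u.length := indexOf_split hu'
    have hi2 : (u ++ (k+1) :: (k+2) :: v).idxOf (k+2) = u.length + 1 := by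
      have : u ++ (k+1) :: (k+2) :: v = (u ++ [k+1]) ++ (k+2) :: v := by simp
      rw [this, indexOf_split (by
        simp only [List.mem_append, List.mem_singleton]
        rintro (h | h)
        · have := hu _ h; omega
        · omega)]
      simp
    refine ⟨⟨⟨?_, ?_⟩, ?_⟩, ?_⟩
    · rw [contains132_insert u v (k+1) hu hv]; exact hcont
    · rw [hi1, hi2]
    · rw [hi1]; omega
    · rw [he]; exact hstar
  · intro x hx
    obtain ⟨hm, hc⟩ := Finset.mem_filter.1 hx
    have hperm := mem_permsF.1 hm
    simp only [Bool.and_eq_true, Bool.not_eq_true', beq_iff_eq, decide_eq_true_eq] at hc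
    obtain ⟨⟨⟨hcont, hidx⟩, hge⟩, hstar⟩ := hc
    obtain ⟨u, v, rfl, hu, hv, hiu⟩ := decomp_x hperm hidx
    rw [erase_insert (k+1) u v hu, insA_eq (k+1) u v (fun h => by have := hu _ h; omega)]
  · intro y hy
    obtain ⟨hm, hc, hge⟩ := Finset.mem_filter.1 hy
    have hperm := mem_permsF.1 hm
    obtain ⟨u, v, rfl, hu, hv, hiu⟩ := decomp_y hperm
    rw [insA_eq (k+1) u v (fun h => by have := hu _ h; omega),
      erase_insert (k+1) u v hu]

lemma main_rec (k : ℕ) : gCount (k+1) = fCount (k+2) + gCount k := by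
  have hsplit := Finset.card_filter_add_card_filter_not
    (s := (permsF (k+1)).filter (fun x => (!containsPat [1,3,2] x && !has123star x) = true))
    (p := fun y => 1 ≤ List.idxOf (k+1) y)
  rw [Finset.filter_filter, Finset.filter_filter] at hsplit
  have hf : fCount (k+2) = ((permsF (k+1)).filter
      (fun y => ((!containsPat [1,3,2] y && !has123star y) = true)
        ∧ 1 ≤ List.idxOf (k+1) y)).card := by
    rw [fCount, show (k+2)-1 = k+1 from rfl, count_eq, E1]
  have hg1 : gCount (k+1) = (((permsF (k+1)).filter
      (fun x => (!containsPat [1,3,2] x && !has123star x) = true))).card := by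
    rw [gCount, count_eq]
  have hg0 : gCount k = ((permsF k).filter
      (fun x => (!containsPat [1,3,2] x && !has123star x) = true)).card := by
    rw [gCount, count_eq]
  rw [hf, hg1, hg0, ← E3 k]
  omega

/-- For `n ≥ 2`, `f n = g (n-1) - g (n-2)`. -/
theorem f_eq_g_sub (n : ℕ) (hn : 2 ≤ n) :
    (fCount n : ℤ) = gCount (n-1) - gCount (n-2) := by
  obtain ⟨k, rfl⟩ : ∃ k, n = k + 2 := ⟨n - 2, by omega⟩
  rw [show k+2-1 = k+1 from rfl, show k+2-2 = k from rfl]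
  have := main_rec k
  omega
end

section
/- With g_n = |Av_n(132, 123*)| and f_n as the number of x ∈ Av_n(132) with ind_x(n)-1 = ind_x(n-1) > 1 and deletion of n from x avoiding 123*, for all n ≥ 2 it holds that Σ_{i=0}^{n-1} g_i g_{n-1-i} = g_n + f_n. -/
section Aux

def Has132 (x : List ℕ) : Prop :=
  ∃ i j k, i < j ∧ j < k ∧ k < x.length ∧ x.getD i 0 < x.getD k 0 ∧ x.getD k 0 < x.getD j 0

lemma isoOrd_132 (a b c : ℕ) : isoOrd [1,3,2] [a,b,c] = true ↔ (a < c ∧ c < b) := by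
  simp [isoOrd, List.range_succ]
  omega

lemma sublist3_iff {x : List ℕ} {a b c : ℕ} :
    [a,b,c].Sublist x ↔ ∃ i j k, i < j ∧ j < k ∧ k < x.length ∧
      x.getD i 0 = a ∧ x.getD j 0 = b ∧ x.getD k 0 = c := by
  constructor
  · intro h
    rw [List.sublist_iff_exists_fin_orderEmbedding_get_eq] at h
    obtain ⟨f, hf⟩ := h
    have e0 := hf ⟨0, by simp⟩
    have e1 := hf ⟨1, by simp⟩
    have e2 := hf ⟨2, by simp⟩
    refine ⟨f ⟨0, by simp⟩, f ⟨1, by simp⟩, f ⟨2, by simp⟩, ?_, ?_, ?_, ?_, ?_, ?_⟩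
    · exact f.strictMono (by simp [Fin.lt_def])
    · exact f.strictMono (by simp [Fin.lt_def])
    · exact (f ⟨2, by simp⟩).isLt
    · simp [List.get] at e0; rw [List.getD_eq_getElem _ _ (f _).isLt]; exact e0.symm
    · simp [List.get] at e1; rw [List.getD_eq_getElem _ _ (f _).isLt]; exact e1.symm
    · simp [List.get] at e2; rw [List.getD_eq_getElem _ _ (f _).isLt]; exact e2.symm
  · rintro ⟨i, j, k, hij, hjk, hk, ha, hb, hc⟩
    have : [a,b,c] = List.map x.get [⟨i, by omega⟩, ⟨j, by omega⟩, ⟨k, hk⟩] := by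
      simp [List.get]
      rw [← List.getD_eq_getElem x 0 (by omega), ← List.getD_eq_getElem x 0 (by omega),
        ← List.getD_eq_getElem x 0 hk]
      exact ⟨ha.symm, hb.symm, hc.symm⟩
    rw [this]
    apply List.map_getElem_sublist
    refine List.Pairwise.cons ?_ (List.Pairwise.cons ?_ (List.pairwise_singleton _ _)) <;>
      simp [Fin.lt_def] <;> omega

lemma containsPat132_iff {x : List ℕ} : containsPat [1,3,2] x = true ↔ Has132 x := by
  simp only [containsPat, List.any_eq_true, List.mem_sublistsLen]
  constructor
  · rintro ⟨l, ⟨hsub, hlen⟩, hiso⟩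
    match l, hlen with
    | [a,b,c], _ =>
      rw [isoOrd_132] at hiso
      rw [sublist3_iff] at hsub
      obtain ⟨i, j, k, h1, h2, h3, h4, h5, h6⟩ := hsub
      exact ⟨i, j, k, h1, h2, h3, by omega, by omega⟩
  · rintro ⟨i, j, k, h1, h2, h3, h4, h5⟩
    refine ⟨[x.getD i 0, x.getD j 0, x.getD k 0], ⟨?_, rfl⟩, ?_⟩
    · rw [sublist3_iff]; exact ⟨i, j, k, h1, h2, h3, rfl, rfl, rfl⟩
    · rw [isoOrd_132]; exact ⟨h4, h5⟩

lemma has123star_iff {x : List ℕ} : has123star x = true ↔ Has123Star x := by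
  simp only [has123star, Has123Star, List.any_eq_true, List.mem_range, Bool.and_eq_true,
    decide_eq_true_eq, beq_iff_eq]
  constructor
  · rintro ⟨j, _, ⟨⟨h1, h2⟩, i, hij, h3⟩⟩
    exact ⟨i, j, hij, h1, h3, h2⟩
  · rintro ⟨i, j, hij, h1, h2, h3⟩
    exact ⟨j, by omega, ⟨⟨h1, h3⟩, i, hij, h2⟩⟩

-- getD append helpers
lemma getD_append_lt {L M : List ℕ} {i : ℕ} (h : i < L.length) :
    (L ++ M).getD i 0 = L.getD i 0 :=
  List.getD_append _ _ _ _ h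

lemma getD_append_mid {L M : List ℕ} {n : ℕ} :
    (L ++ n :: M).getD L.length 0 = n := by
  rw [List.getD_append_right _ _ _ _ (Nat.le_refl _), Nat.sub_self, List.getD_cons_zero]

lemma getD_append_right' {L M : List ℕ} {n i : ℕ} (h : L.length < i) :
    (L ++ n :: M).getD i 0 = M.getD (i - L.length - 1) 0 := by
  obtain ⟨d, hd⟩ : ∃ d, i - L.length = d + 1 := ⟨i - L.length - 1, by omega⟩
  rw [List.getD_append_right _ _ _ _ (by omega), hd, List.getD_cons_succ]
  congr 1

lemma mem_getD {l : List ℕ} {a : ℕ} : a ∈ l ↔ ∃ i, i < l.length ∧ l.getD i 0 = a := by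
  rw [List.mem_iff_getElem]
  constructor
  · rintro ⟨i, hi, rfl⟩; exact ⟨i, hi, List.getD_eq_getElem _ _ hi⟩
  · rintro ⟨i, hi, h⟩; exact ⟨i, hi, by rw [← List.getD_eq_getElem _ 0 hi]; exact h⟩

lemma getD_mem {l : List ℕ} {i : ℕ} (h : i < l.length) : l.getD i 0 ∈ l :=
  mem_getD.2 ⟨i, h, rfl⟩

-- S1
lemma has132_append_iff {L R : List ℕ} {n : ℕ}
    (hLn : ∀ a ∈ L, a < n) (hRn : ∀ b ∈ R, b < n) :
    Has132 (L ++ n :: R) ↔ Has132 L ∨ Has132 R ∨ ∃ a ∈ L, ∃ b ∈ R, a < b := by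
  set m := L.length with hm
  have hlen : (L ++ n :: R).length = m + 1 + R.length := by simp [hm]; omega
  constructor
  · rintro ⟨i, j, k, hij, hjk, hk, h1, h2⟩
    rw [hlen] at hk
    rcases lt_trichotomy k m with hkm | hkm | hkm
    · left
      refine ⟨i, j, k, hij, hjk, by omega, ?_, ?_⟩ <;>
        rwa [getD_append_lt (by omega), getD_append_lt (by omega)] at *
    · exfalso
      rw [hkm, getD_append_mid] at h2
      rw [getD_append_lt (by omega)] at h2
      exact absurd h2 (not_lt.2 (le_of_lt (hLn _ (getD_mem (by omega)))))
    · -- k > m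
      have hxk : (L ++ n :: R).getD k 0 = R.getD (k - m - 1) 0 := getD_append_right' hkm
      have hkR : k - m - 1 < R.length := by omega
      rcases lt_trichotomy j m with hjm | hjm | hjm
      · -- j in L, i in L
        right; right
        rw [getD_append_lt (by omega)] at h1
        rw [hxk] at h1
        exact ⟨_, getD_mem (by omega), _, getD_mem hkR, h1⟩
      · -- j = m, i in L
        right; right
        rw [getD_append_lt (by omega), hxk] at h1
        exact ⟨_, getD_mem (by omega), _, getD_mem hkR, h1⟩
      · -- j > m
        have hxj : (L ++ n :: R).getD j 0 = R.getD (j - m - 1) 0 := getD_append_right' hjm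
        rcases lt_trichotomy i m with him | him | him
        · right; right
          rw [getD_append_lt (by omega), hxk] at h1
          exact ⟨_, getD_mem (by omega), _, getD_mem hkR, h1⟩
        · exfalso
          rw [him, getD_append_mid, hxk] at h1
          exact absurd h1 (not_lt.2 (le_of_lt (hRn _ (getD_mem hkR))))
        · right; left
          have hxi : (L ++ n :: R).getD i 0 = R.getD (i - m - 1) 0 := getD_append_right' him
          rw [hxi] at h1; rw [hxj] at h2; rw [hxk] at h1 h2
          exact ⟨i - m - 1, j - m - 1, k - m - 1, by omega, by omega, hkR, h1, h2⟩
  · rintro (⟨i, j, k, hij, hjk, hk, h1, h2⟩ | ⟨i, j, k, hij, hjk, hk, h1, h2⟩ | ⟨a, ha, b, hb, hab⟩)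
    · exact ⟨i, j, k, hij, hjk, by rw [hlen]; omega,
        by rwa [getD_append_lt (by omega), getD_append_lt (by omega)],
        by rwa [getD_append_lt (by omega), getD_append_lt (by omega)]⟩
    · refine ⟨m + 1 + i, m + 1 + j, m + 1 + k, by omega, by omega, by rw [hlen]; omega, ?_, ?_⟩
      · rw [getD_append_right' (by omega), getD_append_right' (by omega)]
        have e1 : m + 1 + i - m - 1 = i := by omega
        have e2 : m + 1 + k - m - 1 = k := by omega
        rwa [e1, e2]
      · rw [getD_append_right' (by omega), getD_append_right' (by omega)]
        have e1 : m + 1 + j - m - 1 = j := by omega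
        have e2 : m + 1 + k - m - 1 = k := by omega
        rwa [e1, e2]
    · obtain ⟨i, hi, hia⟩ := mem_getD.1 ha
      obtain ⟨jr, hjr, hjb⟩ := mem_getD.1 hb
      refine ⟨i, m, m + 1 + jr, by omega, by omega, by rw [hlen]; omega, ?_, ?_⟩
      · rw [getD_append_lt (by omega), getD_append_right' (by omega)]
        have e : m + 1 + jr - m - 1 = jr := by omega
        rw [e, hia, hjb]; exact hab
      · rw [getD_append_mid, getD_append_right' (by omega)]
        have e : m + 1 + jr - m - 1 = jr := by omega
        rw [e, hjb]; exact hRn _ hb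

-- S3 : plain append, all of L greater than all of R
lemma has123star_append_plain {L R : List ℕ}
    (hRL : ∀ b ∈ R, ∀ a ∈ L, b < a) :
    Has123Star (L ++ R) ↔ Has123Star L ∨ Has123Star R := by
  set m := L.length with hm
  have hlen : (L ++ R).length = m + R.length := by simp [hm]
  have hright : ∀ {i : ℕ}, m ≤ i → (L ++ R).getD i 0 = R.getD (i - m) 0 := fun h =>
    List.getD_append_right _ _ _ _ h
  constructor
  · rintro ⟨i, j, hij, hj1, h1, h2⟩
    rw [hlen] at hj1
    rcases lt_or_ge (j+1) m with hjm | hjm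
    · left
      refine ⟨i, j, hij, by omega, ?_, ?_⟩
      · rwa [getD_append_lt (by omega), getD_append_lt (by omega)] at h1
      · rwa [getD_append_lt (by omega), getD_append_lt (by omega)] at h2
    · rcases lt_or_ge j m with hjm2 | hjm2
      · -- j = m - 1, j+1 = m : boundary, contradiction
        exfalso
        have hjq : j + 1 = m := by omega
        have hR0 : 0 < R.length := by omega
        rw [hright (by omega), getD_append_lt (by omega)] at h2
        have : (j:ℕ) + 1 - m = 0 := by omega
        rw [this] at h2
        have := hRL _ (getD_mem hR0) _ (getD_mem (show j < L.length by omega))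
        omega
      · -- j ≥ m : j, j+1 in R
        rcases lt_or_ge i m with him | him
        · exfalso
          rw [getD_append_lt him, hright hjm2] at h1
          have := hRL _ (getD_mem (show j - m < R.length by omega)) _ (getD_mem (show i < L.length from him))
          omega
        · right
          refine ⟨i - m, j - m, by omega, by omega, ?_, ?_⟩
          · rwa [hright him, hright hjm2] at h1
          · have e : j + 1 - m = (j - m) + 1 := by omega
            rwa [hright (by omega), hright hjm2, e] at h2
  · rintro (⟨i, j, hij, hj1, h1, h2⟩ | ⟨i, j, hij, hj1, h1, h2⟩)
    · exact ⟨i, j, hij, by rw [hlen]; omega,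
        by rwa [getD_append_lt (by omega), getD_append_lt (by omega)],
        by rwa [getD_append_lt (by omega), getD_append_lt (by omega)]⟩
    · refine ⟨m + i, m + j, by omega, by rw [hlen]; omega, ?_, ?_⟩
      · have e1 : m + i - m = i := by omega
        have e2 : m + j - m = j := by omega
        rw [hright (by omega), hright (by omega), e1, e2]; exact h1
      · have e1 : m + j + 1 - m = j + 1 := by omega
        have e2 : m + j - m = j := by omega
        rw [hright (by omega), hright (by omega), e1, e2]; exact h2

-- S2 : append with n in the middle
lemma has123star_append_iff {L R : List ℕ} {n : ℕ} (hn : 1 ≤ n)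
    (hLn : ∀ a ∈ L, a < n) (hRn : ∀ b ∈ R, b < n)
    (hRL : ∀ b ∈ R, ∀ a ∈ L, b < a) (hnd : L.Nodup) :
    Has123Star (L ++ n :: R) ↔ Has123Star L ∨ Has123Star R ∨
      (2 ≤ L.length ∧ L.getD (L.length - 1) 0 = n - 1) := by
  set m := L.length with hm
  have hlen : (L ++ n :: R).length = m + 1 + R.length := by simp [hm]; omega
  constructor
  · rintro ⟨i, j, hij, hj1, h1, h2⟩
    rw [hlen] at hj1
    rcases lt_or_ge (j+1) m with hjm | hjm
    · left
      refine ⟨i, j, hij, by omega, ?_, ?_⟩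
      · rwa [getD_append_lt (by omega), getD_append_lt (by omega)] at h1
      · rwa [getD_append_lt (by omega), getD_append_lt (by omega)] at h2
    · rcases lt_or_ge j m with hjm2 | hjm2
      · -- j + 1 = m : x_{j+1} = n, so x_j = n - 1, bad case
        right; right
        have hjq : j + 1 = m := by omega
        rw [hjq, getD_append_mid, getD_append_lt (by omega)] at h2
        constructor
        · omega
        · rw [show m - 1 = j by omega]; omega
      · rcases lt_or_ge j (m+1) with hjm3 | hjm3
        · -- j = m : x_j = n, x_{j+1} ∈ R, x_{j+1} = n + 1 > n contradiction
          exfalso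
          have hjq : j = m := by omega
          rw [hjq, getD_append_mid, getD_append_right' (by omega)] at h2
          rw [← hm] at h2
          have := hRn _ (getD_mem (show m + 1 - m - 1 < R.length by omega))
          omega
        · -- j > m : x_j, x_{j+1} ∈ R
          rcases lt_or_ge i m with him | him
          · exfalso
            rw [getD_append_lt him, getD_append_right' (by omega)] at h1
            rw [← hm] at h1
            have := hRL _ (getD_mem (show j - m - 1 < R.length by omega)) _
              (getD_mem (show i < L.length from him))
            omega
          · rcases lt_or_ge i (m+1) with him2 | him2
            · exfalso
              have : i = m := by omega
              rw [this, getD_append_mid, getD_append_right' (by omega)] at h1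
              rw [← hm] at h1
              have := hRn _ (getD_mem (show j - m - 1 < R.length by omega))
              omega
            · right; left
              refine ⟨i - m - 1, j - m - 1, by omega, by omega, ?_, ?_⟩
              · rwa [getD_append_right' (by omega), getD_append_right' (by omega)] at h1
              · have e : j + 1 - m - 1 = (j - m - 1) + 1 := by omega
                rwa [getD_append_right' (by omega), getD_append_right' (by omega), e] at h2
  · rintro (⟨i, j, hij, hj1, h1, h2⟩ | ⟨i, j, hij, hj1, h1, h2⟩ | ⟨hm2, hlast⟩)
    · exact ⟨i, j, hij, by rw [hlen]; omega,
        by rwa [getD_append_lt (by omega), getD_append_lt (by omega)],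
        by rwa [getD_append_lt (by omega), getD_append_lt (by omega)]⟩
    · refine ⟨m + 1 + i, m + 1 + j, by omega, by rw [hlen]; omega, ?_, ?_⟩
      · have e1 : m + 1 + i - m - 1 = i := by omega
        have e2 : m + 1 + j - m - 1 = j := by omega
        rw [getD_append_right' (by omega), getD_append_right' (by omega), e1, e2]; exact h1
      · have e1 : m + 1 + j + 1 - m - 1 = j + 1 := by omega
        have e2 : m + 1 + j - m - 1 = j := by omega
        rw [getD_append_right' (by omega), getD_append_right' (by omega), e1, e2]; exact h2
    · -- bad case : i = m - 2, j = m - 1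
      have hne : L.getD (m-2) 0 ≠ L.getD (m-1) 0 := by
        intro he
        have h1 : m - 2 < L.length := by omega
        have h2 : m - 1 < L.length := by omega
        rw [List.getD_eq_getElem _ _ h1, List.getD_eq_getElem _ _ h2] at he
        have := (List.Nodup.getElem_inj_iff hnd).1 he
        omega
      have hlt : L.getD (m-2) 0 < n - 1 := by
        have := hLn _ (getD_mem (show m - 2 < L.length by omega))
        rw [hlast] at hne
        omega
      refine ⟨m - 2, m - 1, by omega, by rw [hlen]; omega, ?_, ?_⟩
      · rw [getD_append_lt (by omega), getD_append_lt (by omega), hlast]; exact hlt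
      · rw [show m - 1 + 1 = m by omega, getD_append_mid, getD_append_lt (by omega), hlast]
        omega

lemma toFinset_range' (a k : ℕ) : (List.range' a k).toFinset = Finset.Ico a (a + k) := by
  induction k generalizing a with
  | zero => simp
  | succ k ih =>
    rw [List.range'_succ]
    simp only [List.toFinset_cons, ih]
    ext b
    simp only [Finset.mem_insert, Finset.mem_Ico]
    omega

lemma perm_range'_of_bounds {l : List ℕ} {a k : ℕ} (hnd : l.Nodup) (hlen : l.length = k)
    (hb : ∀ b ∈ l, a ≤ b ∧ b < a + k) : l.Perm (List.range' a k) := by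
  apply List.perm_of_nodup_nodup_toFinset_eq hnd (List.nodup_range')
  rw [toFinset_range']
  apply Finset.eq_of_subset_of_card_le
  · intro b hb'
    rw [List.mem_toFinset] at hb'
    rw [Finset.mem_Ico]
    exact hb _ hb'
  · rw [Nat.card_Ico, List.toFinset_card_of_nodup hnd]
    omega

-- R takes the bottom values
lemma R_bounds {L R : List ℕ} {n : ℕ} (hnd : (L ++ n :: R).Nodup)
    (hall : ∀ v ∈ L ++ n :: R, 1 ≤ v ∧ v ≤ n)
    (hRL : ∀ b ∈ R, ∀ a ∈ L, b < a)
    (hlen : L.length + 1 + R.length = n) :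
    ∀ b ∈ R, 1 ≤ b ∧ b ≤ R.length := by
  intro b hbR
  rw [List.nodup_append] at hnd
  obtain ⟨hndL, hndnR, hdisj⟩ := hnd
  have hnL : n ∉ L := fun h => hdisj n h n List.mem_cons_self rfl
  have hbn : b < n := by
    have h1 := (hall b (by simp [hbR])).2
    have hbne : b ≠ n := by
      intro h
      exact (List.nodup_cons.1 hndnR).1 (h ▸ hbR)
    omega
  have hsub : insert n L.toFinset ⊆ Finset.Ioc b n := by
    intro a ha
    rw [Finset.mem_insert] at ha
    rw [Finset.mem_Ioc]
    rcases ha with rfl | ha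
    · exact ⟨hbn, le_refl _⟩
    · rw [List.mem_toFinset] at ha
      exact ⟨hRL _ hbR _ ha, (hall a (by simp [ha])).2⟩
  have hcard := Finset.card_le_card hsub
  rw [Finset.card_insert_of_notMem (by simpa using hnL),
    List.toFinset_card_of_nodup hndL, Nat.card_Ioc] at hcard
  exact ⟨(hall b (by simp [hbR])).1, by omega⟩

-- L takes the top values
lemma L_bounds {L R : List ℕ} {n : ℕ}
    (hall : ∀ v ∈ L ++ n :: R, 1 ≤ v ∧ v ≤ n) (hndR : R.Nodup) (hnR : n ∉ R)
    (hRL : ∀ b ∈ R, ∀ a ∈ L, b < a) (hnL : n ∉ L)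
    (hlen : L.length + 1 + R.length = n) :
    ∀ a ∈ L, R.length + 1 ≤ a ∧ a < R.length + 1 + L.length := by
  intro a haL
  have ha1 : 1 ≤ a := (hall a (by simp [haL])).1
  have han : a < n := by
    have h1 := (hall a (by simp [haL])).2
    have h2 : a ≠ n := fun h => hnL (h ▸ haL)
    omega
  have hsub : R.toFinset ⊆ Finset.Ico 1 a := by
    intro b hb
    rw [List.mem_toFinset] at hb
    rw [Finset.mem_Ico]
    exact ⟨(hall b (by simp [hb])).1, hRL _ hb _ haL⟩
  have hcard := Finset.card_le_card hsub
  rw [List.toFinset_card_of_nodup hndR, Nat.card_Ico] at hcard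
  omega

lemma master {n : ℕ} (hn : 2 ≤ n) {x : List ℕ} (hx : x.Perm (List.range' 1 n))
    (h132 : ¬Has132 x) :
    ∃ L R, x = L ++ n :: R ∧
      L.Perm (List.range' (R.length + 1) L.length) ∧
      R.Perm (List.range' 1 R.length) ∧
      L.length + 1 + R.length = n ∧
      ¬Has132 L ∧ ¬Has132 R ∧
      x.idxOf n = L.length ∧
      x.erase n = L ++ R ∧
      (Has123Star x ↔ (Has123Star L ∨ Has123Star R ∨
        (2 ≤ L.length ∧ L.getD (L.length - 1) 0 = n - 1))) ∧
      (Has123Star (x.erase n) ↔ (Has123Star L ∨ Has123Star R)) ∧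
      ((x.idxOf n = x.idxOf (n-1) + 1 ∧ 1 ≤ x.idxOf (n-1)) ↔
        (2 ≤ L.length ∧ L.getD (L.length - 1) 0 = n - 1)) := by
  have hmemn : n ∈ x := hx.mem_iff.2 (by rw [List.mem_range'_1]; omega)
  obtain ⟨L, R, rfl⟩ := List.append_of_mem hmemn
  set x := L ++ n :: R with hxdef
  have hnd : x.Nodup := hx.nodup_iff.2 (List.nodup_range')
  have hndA := List.nodup_append.1 hnd
  obtain ⟨hndL, hndnR, hdisj⟩ := hndA
  have hnL : n ∉ L := fun h => hdisj n h n List.mem_cons_self rfl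
  have hnR : n ∉ R := (List.nodup_cons.1 hndnR).1
  have hndR : R.Nodup := (List.nodup_cons.1 hndnR).2
  have hall : ∀ v ∈ x, 1 ≤ v ∧ v ≤ n := by
    intro v hv
    have := hx.mem_iff.1 hv
    rw [List.mem_range'_1] at this
    omega
  have hLn : ∀ a ∈ L, a < n := by
    intro a ha
    have := (hall a (by simp [hxdef, ha])).2
    have : a ≠ n := fun h => hnL (h ▸ ha)
    omega
  have hRn : ∀ b ∈ R, b < n := by
    intro b hb
    have := (hall b (by simp [hxdef, hb])).2
    have : b ≠ n := fun h => hnR (h ▸ hb)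
    omega
  have hlen : L.length + 1 + R.length = n := by
    have h := hx.length_eq
    simp only [hxdef, List.length_append, List.length_cons, List.length_range'] at h
    omega
  have hRL : ∀ b ∈ R, ∀ a ∈ L, b < a := by
    intro b hb a ha
    have hnab : ¬ (a < b) := by
      intro hab
      exact h132 ((has132_append_iff hLn hRn).2 (Or.inr (Or.inr ⟨a, ha, b, hb, hab⟩)))
    have : a ≠ b := fun h => hdisj a ha b (by simp [hb]) h
    omega
  have hRperm : R.Perm (List.range' 1 R.length) := by
    apply perm_range'_of_bounds hndR rfl
    intro b hb
    have := R_bounds hnd hall hRL hlen b hb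
    omega
  have hLperm : L.Perm (List.range' (R.length + 1) L.length) := by
    apply perm_range'_of_bounds hndL rfl
    exact L_bounds hall hndR hnR hRL hnL hlen
  have h132L : ¬Has132 L := fun h =>
    h132 ((has132_append_iff hLn hRn).2 (Or.inl h))
  have h132R : ¬Has132 R := fun h =>
    h132 ((has132_append_iff hLn hRn).2 (Or.inr (Or.inl h)))
  have hidxn : x.idxOf n = L.length := by
    rw [hxdef, List.idxOf_append_of_notMem hnL, List.idxOf_cons_self]
    omega
  have herase : x.erase n = L ++ R := by
    rw [hxdef, List.erase_append_right _ hnL, List.erase_cons_head]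
  have hiff1 : Has123Star x ↔ (Has123Star L ∨ Has123Star R ∨
      (2 ≤ L.length ∧ L.getD (L.length - 1) 0 = n - 1)) :=
    has123star_append_iff (by omega) hLn hRn hRL hndL
  have hiff2 : Has123Star (x.erase n) ↔ (Has123Star L ∨ Has123Star R) := by
    rw [herase]
    exact has123star_append_plain hRL
  have hlenx : x.length = L.length + 1 + R.length := by simp [hxdef]; omega
  have hmem1 : n - 1 ∈ x := hx.mem_iff.2 (by rw [List.mem_range'_1]; omega)
  have hadj : (x.idxOf n = x.idxOf (n-1) + 1 ∧ 1 ≤ x.idxOf (n-1)) ↔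
      (2 ≤ L.length ∧ L.getD (L.length - 1) 0 = n - 1) := by
    have hidx1lt : x.idxOf (n-1) < x.length := List.idxOf_lt_length_iff.2 hmem1
    have hget1 : x.getD (x.idxOf (n-1)) 0 = n - 1 := by
      rw [List.getD_eq_getElem _ _ hidx1lt]
      exact List.getElem_idxOf hidx1lt
    constructor
    · rintro ⟨h1, h2⟩
      have hL2 : 2 ≤ L.length := by omega
      have him : x.idxOf (n-1) = L.length - 1 := by omega
      refine ⟨hL2, ?_⟩
      rw [← hget1, him, hxdef, getD_append_lt (by omega)]
    · rintro ⟨hL2, hgl⟩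
      have hgx : x.getD (L.length - 1) 0 = n - 1 := by
        rw [hxdef, getD_append_lt (by omega)]; exact hgl
      have hidx : x.idxOf (n-1) = L.length - 1 := by
        have h1 : x[x.idxOf (n-1)]'hidx1lt = n - 1 := List.getElem_idxOf hidx1lt
        have h2 : x[L.length - 1]'(by omega) = n - 1 := by
          rw [← List.getD_eq_getElem x 0 (by omega)]; exact hgx
        have := (List.Nodup.getElem_inj_iff hnd).1 (h1.trans h2.symm)
        exact this
      omega
  exact ⟨L, R, rfl, hLperm, hRperm, hlen, h132L, h132R, hidxn, herase, hiff1, hiff2, hadj⟩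

lemma containsPat132_eq_false {x : List ℕ} : (containsPat [1,3,2] x = false) ↔ ¬Has132 x := by
  rw [← containsPat132_iff]
  simp

lemma has123star_eq_false {x : List ℕ} : (has123star x = false) ↔ ¬Has123Star x := by
  rw [← has123star_iff]
  simp

def pset (a k : ℕ) : Finset (List ℕ) :=
  ((List.range' a k).permutations.filter fun x =>
    !containsPat [1,3,2] x && !has123star x).toFinset

lemma mem_pset {a k : ℕ} {x : List ℕ} :
    x ∈ pset a k ↔ x.Perm (List.range' a k) ∧ ¬Has132 x ∧ ¬Has123Star x := by
  simp only [pset, List.mem_toFinset, List.mem_filter, List.mem_permutations,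
    Bool.and_eq_true, Bool.not_eq_true', containsPat132_eq_false, has123star_eq_false]
  try tauto

lemma card_pset1 (k : ℕ) : (pset 1 k).card = gCount k := by
  rw [pset, gCount, List.toFinset_card_of_nodup]
  exact List.Nodup.filter _ (List.nodup_permutations _ (List.nodup_range'))

def Fset (n : ℕ) : Finset (List ℕ) :=
  ((List.range' 1 n).permutations.filter fun x =>
    !containsPat [1,3,2] x && (x.idxOf n == x.idxOf (n-1) + 1) &&
      decide (1 ≤ x.idxOf (n-1)) && !has123star (x.erase n)).toFinset

lemma mem_Fset {n : ℕ} {x : List ℕ} :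
    x ∈ Fset n ↔ x.Perm (List.range' 1 n) ∧ ¬Has132 x ∧
      x.idxOf n = x.idxOf (n-1) + 1 ∧ 1 ≤ x.idxOf (n-1) ∧
      ¬Has123Star (x.erase n) := by
  simp only [Fset, List.mem_toFinset, List.mem_filter, List.mem_permutations,
    Bool.and_eq_true, Bool.not_eq_true', containsPat132_eq_false, has123star_eq_false,
    beq_iff_eq, decide_eq_true_eq]
  tauto

lemma card_Fset (n : ℕ) : (Fset n).card = fCount n := by
  rw [Fset, fCount, List.toFinset_card_of_nodup]
  exact List.Nodup.filter _ (List.nodup_permutations _ (List.nodup_range'))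

def Cset (n : ℕ) : Finset (List ℕ) :=
  ((List.range' 1 n).permutations.filter fun x =>
    !containsPat [1,3,2] x && !has123star (x.erase n)).toFinset

lemma mem_Cset {n : ℕ} {x : List ℕ} :
    x ∈ Cset n ↔ x.Perm (List.range' 1 n) ∧ ¬Has132 x ∧ ¬Has123Star (x.erase n) := by
  simp only [Cset, List.mem_toFinset, List.mem_filter, List.mem_permutations,
    Bool.and_eq_true, Bool.not_eq_true', containsPat132_eq_false, has123star_eq_false]
  try tauto

-- invariance under adding a constant
lemma getD_map_add {x : List ℕ} {c i : ℕ} (h : i < x.length) :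
    (x.map (· + c)).getD i 0 = x.getD i 0 + c := by
  rw [List.getD_eq_getElem _ _ (by simpa using h), List.getD_eq_getElem _ _ h,
    List.getElem_map]

lemma has132_map_add {x : List ℕ} {c : ℕ} : Has132 (x.map (· + c)) ↔ Has132 x := by
  constructor
  · rintro ⟨i, j, k, h1, h2, h3, h4, h5⟩
    rw [List.length_map] at h3
    rw [getD_map_add (by omega), getD_map_add h3] at h4
    rw [getD_map_add h3, getD_map_add (by omega)] at h5
    exact ⟨i, j, k, h1, h2, h3, by omega, by omega⟩
  · rintro ⟨i, j, k, h1, h2, h3, h4, h5⟩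
    refine ⟨i, j, k, h1, h2, by simpa using h3, ?_, ?_⟩ <;>
      rw [getD_map_add (by omega), getD_map_add (by omega)] <;> omega

lemma has123star_map_add {x : List ℕ} {c : ℕ} :
    Has123Star (x.map (· + c)) ↔ Has123Star x := by
  constructor
  · rintro ⟨i, j, h1, h2, h3, h4⟩
    rw [List.length_map] at h2
    rw [getD_map_add (by omega), getD_map_add (by omega)] at h3
    rw [getD_map_add (by omega), getD_map_add (by omega)] at h4
    exact ⟨i, j, h1, h2, by omega, by omega⟩
  · rintro ⟨i, j, h1, h2, h3, h4⟩
    refine ⟨i, j, h1, by simpa using h2, ?_, ?_⟩ <;>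
      rw [getD_map_add (by omega), getD_map_add (by omega)] <;> omega

lemma map_add_range'' (c a k : ℕ) :
    (List.range' a k).map (· + c) = List.range' (c + a) k := by
  rw [show ((· + c) : ℕ → ℕ) = (fun v => c + v) from funext fun v => Nat.add_comm v c,
    List.map_add_range']

lemma card_pset_shift (c k : ℕ) : (pset (c+1) k).card = gCount k := by
  rw [← card_pset1]
  have range_down : (List.range' (c+1) k).map (· - c) = List.range' 1 k := by
    have h1 : List.range' (c+1) k = (List.range' 1 k).map (· + c) :=
      (map_add_range'' c 1 k).symm
    rw [h1, List.map_map,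
      List.map_congr_left (g := id) (fun a _ => by
        simp only [Function.comp_apply, id_eq]; omega),
      List.map_id]
  have down_up : ∀ y : List ℕ, (∀ v ∈ y, c + 1 ≤ v) →
      (y.map (· - c)).map (· + c) = y := by
    intro y hval
    rw [List.map_map,
      List.map_congr_left (g := id) (fun a ha => by
        simp only [Function.comp_apply, id_eq]
        have := hval a ha
        omega),
      List.map_id]
  have up_down : ∀ y : List ℕ, (y.map (· + c)).map (· - c) = y := by
    intro y
    rw [List.map_map,
      List.map_congr_left (g := id) (fun a _ => by
        simp only [Function.comp_apply, id_eq]; omega),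
      List.map_id]
  refine Finset.card_bij' (fun y _ => y.map (· - c)) (fun x _ => x.map (· + c))
    ?_ ?_ ?_ ?_
  · intro y hy
    rw [mem_pset] at hy ⊢
    obtain ⟨hp, h1, h2⟩ := hy
    have hval : ∀ v ∈ y, c + 1 ≤ v := fun v hv =>
      ((List.mem_range'_1).1 (hp.mem_iff.1 hv)).1
    refine ⟨?_, ?_, ?_⟩
    · have := hp.map (· - c)
      rwa [range_down] at this
    · rw [← has132_map_add (c := c), down_up y hval]; exact h1
    · rw [← has123star_map_add (c := c), down_up y hval]; exact h2
  · intro x hx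
    rw [mem_pset] at hx ⊢
    obtain ⟨hp, h1, h2⟩ := hx
    refine ⟨?_, ?_, ?_⟩
    · have := hp.map (· + c)
      rwa [map_add_range'' c 1 k] at this
    · rwa [has132_map_add]
    · rwa [has123star_map_add]
  · intro y hy
    rw [mem_pset] at hy
    exact down_up y (fun v hv => ((List.mem_range'_1).1 (hy.1.mem_iff.1 hv)).1)
  · intro x _
    exact up_down x

end Aux


lemma take_drop_of_append {L R : List ℕ} {n k : ℕ} (hk : L.length = k) :
    (L ++ n :: R).take k = L ∧ (L ++ n :: R).drop (k+1) = R := by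
  subst hk
  refine ⟨List.take_left, ?_⟩
  have h : L ++ n :: R = (L ++ [n]) ++ R := by simp
  have h2 : L.length + 1 = (L ++ [n]).length := by simp
  rw [h, h2, List.drop_left]

lemma perm_parts {n k : ℕ} (hk : k < n) :
    (List.range' (n-k) k ++ n :: List.range' 1 (n-1-k)).Perm (List.range' 1 n) := by
  have e1 : List.range' 1 n = List.range' 1 (n-1) ++ [n] := by
    have h := List.range'_1_concat (s := 1) (n := n-1)
    rw [show n-1+1 = n by omega] at h
    rw [h, show 1+(n-1) = n by omega]
  have e2 : List.range' 1 (n-1) = List.range' 1 (n-1-k) ++ List.range' (n-k) k := by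
    have h := List.range'_append (s := 1) (m := n-1-k) (n := k) (step := 1)
    simp only [one_mul] at h
    rw [show 1+(n-1-k) = n-k by omega, show n-1-k+k = n-1 by omega] at h
    exact h.symm
  have p1 : (List.range' (n-k) k ++ n :: List.range' 1 (n-1-k)).Perm
      (n :: (List.range' (n-k) k ++ List.range' 1 (n-1-k))) := List.perm_middle
  have p2 : (List.range' (n-k) k ++ List.range' 1 (n-1-k)).Perm
      (List.range' 1 (n-1-k) ++ List.range' (n-k) k) := List.perm_append_comm
  have p3 : (List.range' 1 n).Perm (n :: List.range' 1 (n-1)) := by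
    rw [e1]; exact List.perm_append_singleton _ _
  refine (p1.trans (p2.cons n)).trans ?_
  rw [← e2]
  exact p3.symm

lemma card_fiber {n k : ℕ} (hn : 2 ≤ n) (hk : k < n) :
    ((Cset n).filter (fun x => x.idxOf n = k)).card = gCount k * gCount (n-1-k) := by
  have h1 : (pset (n-k) k ×ˢ pset 1 (n-1-k)).card = gCount k * gCount (n-1-k) := by
    rw [Finset.card_product, card_pset1]
    congr 1
    rw [show n-k = (n-1-k)+1 by omega, card_pset_shift]
  rw [← h1]
  refine Finset.card_bij' (fun x _ => (x.take k, x.drop (k+1)))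
    (fun p _ => p.1 ++ n :: p.2) ?_ ?_ ?_ ?_
  · intro x hx
    rw [Finset.mem_filter, mem_Cset] at hx
    obtain ⟨⟨hperm, h132, h123e⟩, hidx⟩ := hx
    obtain ⟨L, R, hxeq, hLp, hRp, hlen, h132L, h132R, hidxn, herase, hiff1, hiff2, hadj⟩ :=
      master hn hperm h132
    have hkL : L.length = k := by rw [← hidxn]; exact hidx
    have hRlen : R.length = n - 1 - k := by omega
    have hnotLR : ¬ (Has123Star L ∨ Has123Star R) := fun h => h123e (hiff2.2 h)
    subst hxeq
    obtain ⟨ht, hd⟩ := take_drop_of_append (n := n) (R := R) hkL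
    simp only [ht, hd, Finset.mem_product]
    constructor
    · rw [mem_pset]
      refine ⟨?_, h132L, fun h => hnotLR (Or.inl h)⟩
      rw [hkL, hRlen, show n-1-k+1 = n-k by omega] at hLp
      exact hLp
    · rw [mem_pset]
      refine ⟨?_, h132R, fun h => hnotLR (Or.inr h)⟩
      rw [hRlen] at hRp
      exact hRp
  · intro p hp
    rw [Finset.mem_product, mem_pset, mem_pset] at hp
    obtain ⟨⟨hLp, h132L, h123L⟩, ⟨hRp, h132R, h123R⟩⟩ := hp
    have hLlen : p.1.length = k := by rw [hLp.length_eq, List.length_range']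
    have hRlen : p.2.length = n - 1 - k := by rw [hRp.length_eq, List.length_range']
    have hLn : ∀ a ∈ p.1, a < n := by
      intro a ha
      have := List.mem_range'_1.1 (hLp.mem_iff.1 ha)
      omega
    have hRn : ∀ b ∈ p.2, b < n := by
      intro b hb
      have := List.mem_range'_1.1 (hRp.mem_iff.1 hb)
      omega
    have hRL : ∀ b ∈ p.2, ∀ a ∈ p.1, b < a := by
      intro b hb a ha
      have h1 := List.mem_range'_1.1 (hLp.mem_iff.1 ha)
      have h2 := List.mem_range'_1.1 (hRp.mem_iff.1 hb)
      omega
    have hnL : n ∉ p.1 := fun h => absurd (hLn n h) (lt_irrefl n)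
    rw [Finset.mem_filter, mem_Cset]
    refine ⟨⟨?_, ?_, ?_⟩, ?_⟩
    · exact (hLp.append (hRp.cons n)).trans (perm_parts hk)
    · intro h
      rcases (has132_append_iff hLn hRn).1 h with h | h | ⟨a, ha, b, hb, hab⟩
      · exact h132L h
      · exact h132R h
      · exact absurd hab (not_lt.2 (le_of_lt (hRL b hb a ha)))
    · rw [List.erase_append_right _ hnL, List.erase_cons_head]
      intro h
      rcases (has123star_append_plain hRL).1 h with h | h
      · exact h123L h
      · exact h123R h
    · rw [List.idxOf_append_of_notMem hnL, List.idxOf_cons_self]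
      omega
  · intro x hx
    rw [Finset.mem_filter, mem_Cset] at hx
    obtain ⟨⟨hperm, h132, h123e⟩, hidx⟩ := hx
    obtain ⟨L, R, hxeq, _, _, _, _, _, hidxn, _, _, _, _⟩ := master hn hperm h132
    have hkL : L.length = k := by rw [← hidxn]; exact hidx
    subst hxeq
    obtain ⟨ht, hd⟩ := take_drop_of_append (n := n) (R := R) hkL
    simp only [ht, hd]
  · intro p hp
    rw [Finset.mem_product, mem_pset, mem_pset] at hp
    have hLlen : p.1.length = k := by rw [hp.1.1.length_eq, List.length_range']
    obtain ⟨ht, hd⟩ := take_drop_of_append (n := n) (R := p.2) hLlen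
    simp only [ht, hd, Prod.mk.eta]

lemma card_Cset_left {n : ℕ} (hn : 2 ≤ n) :
    (Cset n).card = ∑ i ∈ Finset.range n, gCount i * gCount (n-1-i) := by
  have hmap : ∀ x ∈ Cset n, x.idxOf n ∈ Finset.range n := by
    intro x hx
    rw [mem_Cset] at hx
    obtain ⟨hperm, h132, _⟩ := hx
    obtain ⟨L, R, _, _, _, hlen, _, _, hidxn, _, _, _, _⟩ := master hn hperm h132
    rw [Finset.mem_range, hidxn]
    omega
  rw [Finset.card_eq_sum_card_fiberwise hmap]
  exact Finset.sum_congr rfl fun k hk => card_fiber hn (Finset.mem_range.1 hk)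

lemma Cset_eq_union {n : ℕ} (hn : 2 ≤ n) : Cset n = pset 1 n ∪ Fset n := by
  ext x
  rw [mem_Cset, Finset.mem_union, mem_pset, mem_Fset]
  constructor
  · rintro ⟨hperm, h132, h123e⟩
    obtain ⟨L, R, hxeq, _, _, _, _, _, hidxn, _, hiff1, hiff2, hadj⟩ :=
      master hn hperm h132
    have hnotLR : ¬ (Has123Star L ∨ Has123Star R) := fun h => h123e (hiff2.2 h)
    by_cases hbad : 2 ≤ L.length ∧ L.getD (L.length - 1) 0 = n - 1
    · right
      obtain ⟨ha1, ha2⟩ := hadj.2 hbad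
      exact ⟨hperm, h132, ha1, ha2, h123e⟩
    · left
      refine ⟨hperm, h132, fun h => ?_⟩
      rcases hiff1.1 h with h | h | h
      · exact hnotLR (Or.inl h)
      · exact hnotLR (Or.inr h)
      · exact hbad h
  · rintro (⟨hperm, h132, h123⟩ | ⟨hperm, h132, _, _, h123e⟩)
    · obtain ⟨L, R, hxeq, _, _, _, _, _, hidxn, _, hiff1, hiff2, hadj⟩ :=
        master hn hperm h132
      refine ⟨hperm, h132, fun h => h123 (hiff1.2 ?_)⟩
      rcases hiff2.1 h with h | h
      · exact Or.inl h
      · exact Or.inr (Or.inl h)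
    · exact ⟨hperm, h132, h123e⟩

lemma Cset_disjoint {n : ℕ} (hn : 2 ≤ n) : Disjoint (pset 1 n) (Fset n) := by
  rw [Finset.disjoint_left]
  intro x hx1 hx2
  rw [mem_pset] at hx1
  rw [mem_Fset] at hx2
  obtain ⟨hperm, h132, h123⟩ := hx1
  obtain ⟨_, _, ha1, ha2, _⟩ := hx2
  obtain ⟨L, R, hxeq, _, _, _, _, _, hidxn, _, hiff1, hiff2, hadj⟩ :=
    master hn hperm h132
  exact h123 (hiff1.2 (Or.inr (Or.inr (hadj.1 ⟨ha1, ha2⟩))))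

lemma card_Cset_right {n : ℕ} (hn : 2 ≤ n) :
    (Cset n).card = gCount n + fCount n := by
  rw [Cset_eq_union hn, Finset.card_union_of_disjoint (Cset_disjoint hn),
    card_pset1, card_Fset]


/-- For `n ≥ 2`, `Σ_{i=0}^{n-1} g i * g (n-1-i) = g n + f n`. -/


theorem sum_g_eq (n : ℕ) (hn : 2 ≤ n) :
    ∑ i ∈ Finset.range n, gCount i * gCount (n-1-i) = gCount n + fCount n := by
  rw [← card_Cset_left hn, card_Cset_right hn]
end

section
/- Suppose x ∈ S_n avoids 123 and every cell C_{i,j} of its grid decomposition contains at most one entry, where cells are intersections of horizontal strips determined by consecutive left-to-right minima (values strictly between m_i and m_{i-1}) and vertical strips B_j of entries between consecutive left-to-right minima. Then x avoids the bivincular pattern 132* (no positions i<j with x_i < x_{j+1} and x_j = x_{j+1}+1), and conversely. -/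
/-- Position `p` (0-based) holds a left-to-right minimum of `x`. -/
def IsLtrMinPos (x : List ℕ) (p : ℕ) : Prop :=
  p < x.length ∧ ∀ k < p, x.getD p 0 < x.getD k 0


section Aux

private lemma iso123_aux (a b c : ℕ) (h1 : a < b) (h2 : b < c) :
    isoOrd [1,2,3] [a,b,c] = true := by
  simp [isoOrd, List.range_succ]; omega

private lemma no123_aux {x : List ℕ} (h : containsPat [1,2,3] x = false) :
    ∀ i j k, i < j → j < k → k < x.length →
      x.getD i 0 < x.getD j 0 → x.getD j 0 < x.getD k 0 → False := by
  intro i j k hij hjk hk h1 h2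
  have hi : i < x.length := by omega
  have hj : j < x.length := by omega
  have hsub : List.Sublist [x.getD i 0, x.getD j 0, x.getD k 0] x := by
    have := List.map_getElem_sublist (l := x) (is := [⟨i,hi⟩,⟨j,hj⟩,⟨k,hk⟩])
      (by simp [hij, hjk]; omega)
    simpa [List.getD_eq_getElem, hi, hj, hk] using this
  have : containsPat [1,2,3] x = true := by
    simp only [containsPat, List.any_eq_true]
    exact ⟨_, (List.mem_sublistsLen).2 ⟨hsub, rfl⟩, iso123_aux _ _ _ h1 h2⟩
  simp [this] at h

end Aux

/-- For `x ∈ Av_n(123)` : every cell of the grid decomposition of `x` contains at most one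
entry iff `x` avoids `132*`.  Two non-left-to-right-minimum positions `p < q` lie in the same
cell iff there is no left-to-right minimum strictly between them (same vertical strip) and
every left-to-right minimum value lies below `x p` iff it lies below `x q`
(same horizontal strip). -/
theorem cells_at_most_one_iff_avoids_132star (n : ℕ) (x : List ℕ) (hx : IsPermList n x)
    (h123 : containsPat [1,2,3] x = false) :
    (∀ p q, p < q → q < x.length → ¬ IsLtrMinPos x p → ¬ IsLtrMinPos x q →
        (∀ r, p < r → r < q → ¬ IsLtrMinPos x r) →
        (∀ m, IsLtrMinPos x m → (x.getD m 0 < x.getD p 0 ↔ x.getD m 0 < x.getD q 0)) →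
        False) ↔
      ¬ Has132Star x := by
  have hnd : x.Nodup := hx.nodup_iff.2 (List.nodup_range' _ Nat.one_pos)
  have hlen : x.length = n := hx.length_eq.trans List.length_range'
  have hdist : ∀ a b, a < x.length → b < x.length → a ≠ b →
      x.getD a 0 ≠ x.getD b 0 := by
    intro a b ha hb hne
    rw [List.getD_eq_getElem _ _ ha, List.getD_eq_getElem _ _ hb]
    exact fun e => hne (hnd.getElem_inj_iff.1 e)
  have hval : ∀ t, t < x.length → 1 ≤ x.getD t 0 ∧ x.getD t 0 ≤ n := by
    intro t ht
    have h1 : x.getD t 0 ∈ x := by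
      rw [List.getD_eq_getElem _ _ ht]; exact List.getElem_mem ht
    have := hx.subset h1
    rw [List.mem_range'_1] at this
    omega
  have hpos : ∀ u, 1 ≤ u → u ≤ n → ∃ t, t < x.length ∧ x.getD t 0 = u := by
    intro u h1 h2
    have : u ∈ x := hx.mem_iff.2 (List.mem_range'_1.2 ⟨h1, by omega⟩)
    obtain ⟨t, ht, he⟩ := List.mem_iff_getElem.1 this
    exact ⟨t, ht, by rw [List.getD_eq_getElem _ _ ht, he]⟩
  have hno := no123_aux h123
  have hnotmin : ∀ a, a < x.length → ¬ IsLtrMinPos x a →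
      ∃ k, k < a ∧ x.getD k 0 < x.getD a 0 := by
    intro a ha hnm
    by_contra hc
    push_neg at hc
    exact hnm ⟨ha, fun k hk => by
      have h1 := hc k hk
      have h2 := hdist k a (by omega) ha (by omega)
      omega⟩
  have hdec : ∀ a b, a < b → b < x.length → ¬ IsLtrMinPos x a → ¬ IsLtrMinPos x b →
      x.getD b 0 < x.getD a 0 := by
    intro a b hab hb hna hnb
    obtain ⟨k, hk, hklt⟩ := hnotmin a (by omega) hna
    have h1 : ¬ (x.getD a 0 < x.getD b 0) := fun hlt => hno k a b hk hab hb hklt hlt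
    have h2 := hdist a b (by omega) hb (by omega)
    omega
  constructor
  · -- cells ≤ 1 entry → no 132*
    intro H h132
    obtain ⟨i, j, hij, hj1, h1, h2⟩ := h132
    have hnj : ¬ IsLtrMinPos x j := by
      rintro ⟨-, hm⟩
      have := hm i hij
      omega
    have hnj1 : ¬ IsLtrMinPos x (j+1) := by
      rintro ⟨-, hm⟩
      have := hm i (by omega)
      omega
    refine H j (j+1) (by omega) hj1 hnj hnj1 (fun r hr1 hr2 => absurd hr2 (by omega)) ?_
    intro m hm
    have hne : x.getD m 0 ≠ x.getD (j+1) 0 := by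
      refine hdist m (j+1) hm.1 hj1 (fun e => hnj1 ?_)
      rwa [e] at hm
    omega
  · -- no 132* → cells ≤ 1 entry
    intro h132 p q hpq hq hnp hnq hbet hstrip
    have hp : p < x.length := by omega
    have hnonmin : ∀ r, p ≤ r → r ≤ q → ¬ IsLtrMinPos x r := by
      intro r h1 h2
      rcases eq_or_lt_of_le h1 with rfl | h1
      · exact hnp
      rcases eq_or_lt_of_le h2 with rfl | h2
      · exact hnq
      exact hbet r h1 h2
    have hq1 : q - 1 < q := by omega
    have hpq1 : p ≤ q - 1 := by omega
    have hnq1 : ¬ IsLtrMinPos x (q-1) := hnonmin _ hpq1 (by omega)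
    have hdq : x.getD q 0 < x.getD (q-1) 0 := hdec _ _ hq1 hq hnq1 hnq
    have hpq' : x.getD q 0 < x.getD p 0 := hdec _ _ hpq hq hnp hnq
    have hpge : x.getD (q-1) 0 ≤ x.getD p 0 := by
      rcases eq_or_lt_of_le hpq1 with rfl | h
      · exact le_refl _
      · exact le_of_lt (hdec _ _ h (by omega) hnp hnq1)
    -- the entry just left of q has value exactly x_q + 1
    have hstep : x.getD (q-1) 0 = x.getD q 0 + 1 := by
      by_contra hc
      have hu : x.getD q 0 + 1 < x.getD (q-1) 0 := by omega
      set u := x.getD q 0 + 1 with hu_def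
      have hun : u ≤ n := le_trans (le_of_lt (lt_of_lt_of_le hu hpge)) (hval p hp).2
      obtain ⟨t, ht, hxt⟩ := hpos u (by omega) hun
      have htnm : ¬ IsLtrMinPos x t := by
        intro hmt
        have := hstrip t hmt
        rw [hxt] at this
        omega
      rcases lt_trichotomy t p with h | h | h
      · obtain ⟨k, hk, hklt⟩ := hnotmin t ht htnm
        exact hno k t p hk h hp hklt (by omega)
      · rw [h] at hxt; omega
      · rcases lt_trichotomy t q with h' | h' | h'
        · rcases lt_trichotomy t (q-1) with h'' | h'' | h''
          · have := hdec t (q-1) h'' (by omega) (hnonmin t (by omega) (by omega)) hnq1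
            omega
          · rw [h''] at hxt; omega
          · omega
        · rw [h'] at hxt; omega
        · obtain ⟨k, hk, hklt⟩ := hnotmin q hq hnq
          exact hno k q t hk h' ht hklt (by omega)
    -- find an earlier entry below x_q
    obtain ⟨i, hi, hilt⟩ := hnotmin p hp hnp
    have hiq : x.getD i 0 < x.getD q 0 := by
      by_contra hc
      have hne : x.getD i 0 ≠ x.getD q 0 := hdist i q (by omega) hq (by omega)
      have hgt : x.getD q 0 < x.getD i 0 := by omega
      by_cases hmi : IsLtrMinPos x i
      · have := hstrip i hmi
        omega
      · obtain ⟨k, hk, hklt⟩ := hnotmin i (by omega) hmi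
        exact hno k i p hk hi hp hklt hilt
    -- produce the 132* occurrence
    refine h132 ⟨i, q-1, by omega, ?_, ?_, ?_⟩
    · omega
    · have e : q - 1 + 1 = q := by omega
      rw [e]; exact hiq
    · have e : q - 1 + 1 = q := by omega
      rw [e]; exact hstep
end
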